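/- Let a group of d users each pick each of n files independently with probability p = 1−q. Fix a partition of the d users into two groups of size d/2 each. Then the probability that one group's file union is contained in the other's is at most 2(1 + q^d − q^{d/2})^n. -/

import Mathlib

open MeasureTheory Finset
open scoped ENNReal

namespace ProbSplitAux

/-- weight of a single Bernoulli coordinate -/
noncomputable def w (p : ℝ≥0∞) : Bool → ℝ≥0∞ := fun b => cond b p (1 - p)

lemma w_sum {p : ℝ≥0∞} (hp : p ≤ 1) : w p true + w p false = 1 := by
  show p + (1 - p) = 1
  exact add_tsub_cancel_of_le hp

lemma pi_singleton {ι : Type*} [Fintype ι] (p : ℝ≥0∞) (hp : p ≤ 1) (ω : ι → Bool) :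
    Measure.pi (fun _ : ι => (PMF.bernoulli p.toNNReal (by simpa using ENNReal.toNNReal_mono ENNReal.one_ne_top hp)).toMeasure) {ω} = ∏ i, w p (ω i) := by
  rw [← Set.univ_pi_singleton ω, Measure.pi_pi]
  refine Finset.prod_congr rfl fun i _ => ?_
  rw [PMF.toMeasure_apply_singleton _ _ (measurableSet_singleton _)]
  refine (PMF.bernoulli_apply (p := p.toNNReal) ((ENNReal.toNNReal_mono ENNReal.one_ne_top hp).trans (by simp)) (ω i)).trans ?_
  have hpt : p ≠ ⊤ := ne_top_of_le_ne_top ENNReal.one_ne_top hp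
  cases ω i <;> simp [w, ENNReal.coe_sub, ENNReal.coe_toNNReal hpt]

lemma meas_eq_sum {ι : Type*} [Fintype ι] (p : ℝ≥0∞) (hp : p ≤ 1) (A : Finset (ι → Bool)) :
    Measure.pi (fun _ : ι => (PMF.bernoulli p.toNNReal (by simpa using ENNReal.toNNReal_mono ENNReal.one_ne_top hp)).toMeasure) ↑A
      = ∑ ω ∈ A, ∏ i, w p (ω i) := by
  classical
  have hA : (↑A : Set (ι → Bool)) = ⋃ ω ∈ A, {ω} := by ext x; simp
  rw [hA, measure_biUnion_finset ?_ fun b _ => measurableSet_singleton b]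
  · exact Finset.sum_congr rfl fun ω _ => pi_singleton p hp ω
  · intro x _ y _ hxy
    exact Set.disjoint_singleton.2 hxy

lemma core (e : ℕ) (p : ℝ≥0∞) (hp : p ≤ 1)
    (M1 M2 : Finset (Fin (2 * e))) (hdisj : Disjoint M1 M2)
    (hcover : M1 ∪ M2 = Finset.univ) (hM1 : M1.card = e) (hM2 : M2.card = e)
    (QF : Finset (Fin (2 * e) → Bool))
    (hQF : ∀ v, v ∈ QF ↔ ((∃ i ∈ M1, v i = true) → ∃ i ∈ M2, v i = true)) :
    ∑ v ∈ QF, ∏ i, w p (v i) ≤ 1 + (1 - p) ^ (2 * e) - (1 - p) ^ e := by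
  classical
  set q : ℝ≥0∞ := 1 - p with hqdef
  have hq1 : q ≤ 1 := tsub_le_self
  have hqtop : q ≠ ∞ := (hq1.trans_lt ENNReal.one_lt_top).ne
  have hmem : ∀ i : Fin (2 * e), (i ∈ M1 ∧ i ∉ M2) ∨ (i ∈ M2 ∧ i ∉ M1) := by
    intro i
    have hi : i ∈ M1 ∪ M2 := hcover ▸ Finset.mem_univ i
    rcases Finset.mem_union.1 hi with h | h
    · exact Or.inl ⟨h, Finset.disjoint_left.1 hdisj h⟩
    · exact Or.inr ⟨h, Finset.disjoint_right.1 hdisj h⟩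
  have wsum : ∑ b : Bool, w p b = 1 := by
    rw [Fintype.sum_bool]; exact w_sum hp
  -- total mass is one
  have htotal : ∑ v : Fin (2 * e) → Bool, ∏ i, w p (v i) = 1 := by
    rw [← Fintype.piFinset_univ,
      ← Finset.prod_univ_sum (fun _ => (Finset.univ : Finset Bool)) (fun _ b => w p b)]
    simp only [Fintype.sum_bool]
    simp [w_sum hp]
  -- the finset of functions vanishing on M2
  set t : Fin (2 * e) → Finset Bool :=
    fun i => if i ∈ M2 then {false} else Finset.univ with htdef
  set Z := Fintype.piFinset t with hZdef
  have hZmem : ∀ v : Fin (2 * e) → Bool, v ∈ Z ↔ ∀ i ∈ M2, v i = false := by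
    intro v
    simp only [hZdef, Fintype.mem_piFinset, htdef]
    constructor
    · intro h i hi
      have := h i
      simpa [hi] using this
    · intro h i
      by_cases hi : i ∈ M2 <;> simp [hi, h]
  -- sum of the M1-weights over Z is 1
  have hZsum : ∑ v ∈ Z, ∏ i ∈ M1, w p (v i) = 1 := by
    have hrw : ∀ v ∈ Z, ∏ i ∈ M1, w p (v i)
        = ∏ i, (fun (i : Fin (2 * e)) (b : Bool) => if i ∈ M1 then w p b else 1) i (v i) := by
      intro v _
      rw [← hcover, Finset.prod_union hdisj]
      have h1 : ∏ i ∈ M1, (if i ∈ M1 then w p (v i) else 1) = ∏ i ∈ M1, w p (v i) :=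
        Finset.prod_congr rfl fun i hi => by simp [hi]
      have h2 : ∏ i ∈ M2, (if i ∈ M1 then w p (v i) else 1) = 1 :=
        Finset.prod_eq_one fun i hi => by
          simp [Finset.disjoint_right.1 hdisj hi]
      rw [h1, h2, mul_one]
    rw [Finset.sum_congr rfl hrw, hZdef,
      ← Finset.prod_univ_sum t (fun i b => if i ∈ M1 then w p b else 1)]
    refine Finset.prod_eq_one fun i _ => ?_
    rcases hmem i with ⟨h1, h2⟩ | ⟨h1, h2⟩
    · simp only [htdef, h2, if_neg, h1, if_pos]
      simpa using wsum
    · simp [htdef, h1, h2]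
  set P1 : (Fin (2 * e) → Bool) → Prop := fun v => ∃ i ∈ M1, v i = true with hP1def
  set S1 := ∑ v ∈ Z.filter P1, ∏ i ∈ M1, w p (v i) with hS1def
  -- the complement of P1 in Z is the constant false function
  have hZnot : Z.filter (fun v => ¬ P1 v) = {fun _ => false} := by
    ext v
    simp only [Finset.mem_filter, Finset.mem_singleton, hP1def, hZmem]
    constructor
    · rintro ⟨hZ, hnot⟩
      funext i
      rcases hmem i with ⟨h1, _⟩ | ⟨h1, _⟩
      · by_contra hne
        exact hnot ⟨i, h1, by simpa using hne⟩
      · exact hZ i h1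
    · rintro rfl
      exact ⟨fun _ _ => rfl, by simp⟩
  have hS1 : S1 + q ^ e = 1 := by
    have := Finset.sum_filter_add_sum_filter_not Z P1 (fun v => ∏ i ∈ M1, w p (v i))
    rw [hZnot] at this
    rw [hS1def]
    have hconst : ∑ v ∈ ({fun _ => false} : Finset (Fin (2 * e) → Bool)),
        ∏ i ∈ M1, w p (v i) = q ^ e := by
      rw [Finset.sum_singleton]
      have : ∏ _i ∈ M1, w p false = (w p false) ^ M1.card := Finset.prod_const _
      rw [this, hM1]; rfl
    rw [← hconst]
    exact this.trans hZsum
  -- the bad set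
  set badF := Finset.univ.filter
    (fun v : Fin (2 * e) → Bool => (∃ i ∈ M1, v i = true) ∧ ∀ i ∈ M2, v i = false) with hbadFdef
  have hbadF : badF = Z.filter P1 := by
    ext v
    simp only [hbadFdef, Finset.mem_filter, Finset.mem_univ, true_and, hZmem, hP1def]
    tauto
  have hbad : ∑ v ∈ badF, ∏ i, w p (v i) = q ^ e * S1 := by
    rw [hbadF, hS1def, Finset.mul_sum]
    refine Finset.sum_congr rfl fun v hv => ?_
    have hvZ : ∀ i ∈ M2, v i = false := (hZmem v).1 (Finset.mem_filter.1 hv).1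
    have hsplit : ∏ i, w p (v i) = (∏ i ∈ M1, w p (v i)) * ∏ i ∈ M2, w p (v i) := by
      rw [← hcover, Finset.prod_union hdisj]
    have hM2prod : ∏ i ∈ M2, w p (v i) = q ^ e := by
      have : ∏ i ∈ M2, w p (v i) = ∏ _i ∈ M2, w p false :=
        Finset.prod_congr rfl fun i hi => by rw [hvZ i hi]
      rw [this, Finset.prod_const, hM2]; rfl
    rw [hsplit, hM2prod, mul_comm]
  -- QF is the complement of badF
  have hQFeq : QF = Finset.univ.filter
      (fun v : Fin (2 * e) → Bool => (∃ i ∈ M1, v i = true) → ∃ i ∈ M2, v i = true) := by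
    ext v; simp [hQF]
  have hcompl : Finset.univ.filter
      (fun v : Fin (2 * e) → Bool =>
        ¬ ((∃ i ∈ M1, v i = true) → ∃ i ∈ M2, v i = true)) = badF := by
    ext v
    simp only [hbadFdef, Finset.mem_filter, Finset.mem_univ, true_and]
    rw [Classical.not_imp]
    simp [Bool.not_eq_true]
  have hsum1 : (∑ v ∈ QF, ∏ i, w p (v i)) + ∑ v ∈ badF, ∏ i, w p (v i) = 1 := by
    rw [hQFeq, ← hcompl]
    exact (Finset.sum_filter_add_sum_filter_not Finset.univ _ _).trans htotal
  -- key identity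
  have hkey : (∑ v ∈ QF, ∏ i, w p (v i)) + q ^ e = 1 + q ^ (2 * e) := by
    have hq2e : q ^ (2 * e) = q ^ e * q ^ e := by rw [two_mul, pow_add]
    calc (∑ v ∈ QF, ∏ i, w p (v i)) + q ^ e
        = (∑ v ∈ QF, ∏ i, w p (v i)) + q ^ e * (S1 + q ^ e) := by rw [hS1, mul_one]
      _ = ((∑ v ∈ QF, ∏ i, w p (v i)) + q ^ e * S1) + q ^ e * q ^ e := by ring
      _ = 1 + q ^ (2 * e) := by rw [← hbad, hsum1, hq2e]
  have hqe_top : q ^ e ≠ ∞ := ENNReal.pow_ne_top hqtop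
  refine le_of_eq ?_
  calc ∑ v ∈ QF, ∏ i, w p (v i)
      = (∑ v ∈ QF, ∏ i, w p (v i)) + q ^ e - q ^ e :=
        (ENNReal.add_sub_cancel_right hqe_top).symm
    _ = 1 + q ^ (2 * e) - q ^ e := by rw [hkey]

lemma aux (n e : ℕ) (p : ℝ≥0∞) (hp : p ≤ 1)
    (M1 M2 : Finset (Fin (2 * e))) (hdisj : Disjoint M1 M2)
    (hcover : M1 ∪ M2 = Finset.univ) (hM1 : M1.card = e) (hM2 : M2.card = e) :
    (Measure.pi fun _ : Fin (2 * e) × Fin n => (PMF.bernoulli p.toNNReal (by simpa using ENNReal.toNNReal_mono ENNReal.one_ne_top hp)).toMeasure)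
      {ω | ∀ j : Fin n, (∃ i ∈ M1, ω (i, j) = true) → ∃ i ∈ M2, ω (i, j) = true}
      ≤ (1 + (1 - p) ^ (2 * e) - (1 - p) ^ e) ^ n := by
  classical
  set S : Set (Fin (2 * e) × Fin n → Bool) :=
    {ω | ∀ j : Fin n, (∃ i ∈ M1, ω (i, j) = true) → ∃ i ∈ M2, ω (i, j) = true} with hSdef
  set A := Finset.univ.filter (· ∈ S) with hAdef
  have hAS : (↑A : Set (Fin (2 * e) × Fin n → Bool)) = S := by
    ext ω; simp [hAdef]
  rw [show S = ↑A from hAS.symm, meas_eq_sum _ hp]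
  set QF := Finset.univ.filter
    (fun v : Fin (2 * e) → Bool => (∃ i ∈ M1, v i = true) → ∃ i ∈ M2, v i = true) with hQFdef
  have hQFmem : ∀ v, v ∈ QF ↔ ((∃ i ∈ M1, v i = true) → ∃ i ∈ M2, v i = true) := by
    intro v; simp [hQFdef]
  have hstep : ∑ ω ∈ A, ∏ x, w p (ω x)
      = ∑ g ∈ Fintype.piFinset (fun _ : Fin n => QF), ∏ j, ∏ i, w p (g j i) := by
    refine Finset.sum_nbij' (fun ω => fun j i => ω (i, j)) (fun g => fun x => g x.2 x.1)
      ?_ ?_ ?_ ?_ ?_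
    · intro ω hω
      simp only [Fintype.mem_piFinset]
      intro j
      rw [hQFmem]
      have : ω ∈ S := by
        have := Finset.mem_filter.1 (hAdef ▸ hω)
        exact this.2
      exact this j
    · intro g hg
      simp only [Fintype.mem_piFinset] at hg
      rw [hAdef, Finset.mem_filter]
      refine ⟨Finset.mem_univ _, ?_⟩
      intro j
      have := (hQFmem (g j)).1 (hg j)
      exact this
    · intro ω _; rfl
    · intro g _; rfl
    · intro ω _
      exact Fintype.prod_prod_type_right (fun x => w p (ω x))
  rw [hstep, ← Finset.prod_univ_sum (fun _ : Fin n => QF) (fun _ v => ∏ i, w p (v i)),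
    Finset.prod_const, Finset.card_univ, Fintype.card_fin]
  exact pow_le_pow_left₀ zero_le (core e p hp M1 M2 hdisj hcover hM1 hM2 QF hQFmem) n

end ProbSplitAux

/-- Random Sampling: `2*e` users each pick each of `n` files independently with
probability `p`; for a fixed partition of the users into two halves `M1`, `M2`
of size `e = d/2` each, the probability that one half's file union is contained
in the other's is at most `2*(1 + q^d - q^(d/2))^n` where `q = 1 - p`. -/
theorem prob_splitting_violated_le (n e : ℕ) (p : ℝ≥0∞) (hp : p ≤ 1)
    (M1 M2 : Finset (Fin (2 * e))) (hdisj : Disjoint M1 M2)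
    (hcover : M1 ∪ M2 = Finset.univ) (hM1 : M1.card = e) (hM2 : M2.card = e) :
    (Measure.pi fun _ : Fin (2 * e) × Fin n => (PMF.bernoulli p.toNNReal (by simpa using ENNReal.toNNReal_mono ENNReal.one_ne_top hp)).toMeasure)
      {ω | (∀ j : Fin n, (∃ i ∈ M1, ω (i, j) = true) → ∃ i ∈ M2, ω (i, j) = true) ∨
           (∀ j : Fin n, (∃ i ∈ M2, ω (i, j) = true) → ∃ i ∈ M1, ω (i, j) = true)} ≤
      2 * (1 + (1 - p) ^ (2 * e) - (1 - p) ^ e) ^ n := by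
  rw [Set.setOf_or, two_mul ((1 + (1 - p) ^ (2 * e) - (1 - p) ^ e) ^ n)]
  refine (measure_union_le _ _).trans (add_le_add ?_ ?_)
  · exact ProbSplitAux.aux n e p hp M1 M2 hdisj hcover hM1 hM2
  · exact ProbSplitAux.aux n e p hp M2 M1 hdisj.symm (by rwa [Finset.union_comm]) hM2 hM1
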